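/- During any mutation sequence on the framed linearly oriented A_n quiver following an allowed shuffle as in the full layered T-system pattern, at every step the mutation vertex k_i has exactly the following incoming arrows within the mutable part: a simple arrow from k_i - 1 (if k_i > 1) and a simple arrow from k_i + 1 (if k_i < n); in particular k_i is a sink of the mutable part. -/

import Mathlib

/-- `IsShuffleSystem elts ks` : the list `ks` is an allowed shuffle of the
lists `(elts 1, ..., elts l), (elts 1, ..., elts (l-1)), ..., (elts 1, elts 2),
(elts 1)` (where `l = elts.length`), i.e. there is an assignment of positions
`pos v m` (position of the `m`-th occurrence of the `v`-th element, 0-based)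
which is bijective onto the positions of `ks`, takes the prescribed values,
lists each row in order, and satisfies the rule that the `v`-th element in row
`m+1` comes after the `(v+1)`-st element in row `m`. -/
def IsShuffleSystem {α : Type*} (elts : List α) (ks : List α) : Prop :=
  ∃ pos : ℕ → ℕ → ℕ,
    (∀ v m, (hv : v < elts.length) → m < elts.length - v →
      ∃ h : pos v m < ks.length, ks.get ⟨pos v m, h⟩ = elts.get ⟨v, hv⟩) ∧
    (∀ v m m', v < elts.length → m < m' → m' < elts.length - v →
      pos v m < pos v m') ∧
    (∀ v m, v + 1 < elts.length → m < elts.length - (v + 1) →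
      pos v m < pos (v + 1) m) ∧
    (∀ v m, v + 1 < elts.length → m < elts.length - (v + 1) →
      pos (v + 1) m < pos v (m + 1)) ∧
    (∀ i : Fin ks.length, ∃ v m, v < elts.length ∧ m < elts.length - v ∧
      pos v m = i.val)

/-- The exchange matrix of the linearly oriented type `A_n` quiver
`1 ← 2 ← ⋯ ← n` (0-based): an arrow `i+1 → i` for each `i`, i.e.
`b_{i+1,i} = 1`. -/
def AnMat (n : ℕ) : Fin n → Fin n → ℤ := fun i j =>
  if i.val = j.val + 1 then 1 else if i.val + 1 = j.val then -1 else 0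

/-- Matrix mutation of a square exchange matrix at the index `k`. -/
def mutSq {n : ℕ} (B : Fin n → Fin n → ℤ) (k : Fin n) : Fin n → Fin n → ℤ :=
  fun i j =>
    if i = k ∨ j = k then -B i j
    else B i j + (|B i k| * B k j + B i k * |B k j|) / 2

/-- Iterated mutation of a square exchange matrix along a list of indices. -/
def mutSeqSq {n : ℕ} (B : Fin n → Fin n → ℤ) (ks : List (Fin n)) :
    Fin n → Fin n → ℤ :=
  ks.foldl mutSq B

/-- The principal-coefficients (framed) extension of an exchange matrix: the
identity matrix stacked below `B`; rows are indexed by `Fin n ⊕ Fin n`, the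
second summand indexing the frozen copies `i'`. -/
def framedMat {n : ℕ} (B : Fin n → Fin n → ℤ) : (Fin n ⊕ Fin n) → Fin n → ℤ :=
  fun i j => Sum.elim (fun a => B a j) (fun a => if a = j then 1 else 0) i

/-- Mutation of an extended (framed) exchange matrix at a mutable index `k`. -/
def mutExt {n : ℕ} (B : (Fin n ⊕ Fin n) → Fin n → ℤ) (k : Fin n) :
    (Fin n ⊕ Fin n) → Fin n → ℤ :=
  fun i j =>
    if i = Sum.inl k ∨ j = k then -B i j
    else B i j + (|B i k| * B (Sum.inl k) j + B i k * |B (Sum.inl k) j|) / 2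

/-- Iterated mutation of an extended exchange matrix along a list of indices. -/
def mutExtSeq {n : ℕ} (B : (Fin n ⊕ Fin n) → Fin n → ℤ) (ks : List (Fin n)) :
    (Fin n ⊕ Fin n) → Fin n → ℤ :=
  ks.foldl mutExt B

theorem tst : True := trivial


def eps (e : ℕ) : ℤ := if Even e then 1 else -1

lemma eps_succ (e : ℕ) : eps (e + 1) = -eps e := by
  unfold eps; by_cases h : Even e <;> simp [Nat.even_add_one, h]

lemma abs_eps (e : ℕ) : |eps e| = 1 := by unfold eps; split <;> norm_num

lemma eps_add_self (m : ℕ) : eps (m + m) = 1 := by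
  unfold eps; rw [if_pos ⟨m, rfl⟩]

lemma eps_add_succ (m : ℕ) : eps (m + (m + 1)) = -1 := by
  have : m + (m + 1) = (m + m) + 1 := by omega
  rw [this, eps_succ, eps_add_self]

lemma eps_succ_add (m : ℕ) : eps ((m + 1) + m) = -1 := by
  have : (m + 1) + m = (m + m) + 1 := by omega
  rw [this, eps_succ, eps_add_self]

lemma count_take_eq {α : Type*} [DecidableEq α] (l : List α) (v : α) :
    ∀ i, i ≤ l.length →
      (l.take i).count v = ((Finset.range i).filter (fun p => l[p]? = some v)).card
  | 0, _ => by simp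
  | (i+1), hi => by
      have h1 : i < l.length := hi
      rw [show l.take (i+1) = l.take i ++ [l.get ⟨i, h1⟩] from by
            rw [List.take_succ]; simp [List.getElem?_eq_getElem h1],
        List.count_append, count_take_eq l v i (le_of_lt h1), Finset.range_add_one,
        Finset.filter_insert]
      have hgv : l.get ⟨i, h1⟩ = l[i] := rfl
      by_cases hv : l.get ⟨i, h1⟩ = v
      · rw [if_pos (by simp [List.getElem?_eq_getElem h1, ← hv, hgv]),
          Finset.card_insert_of_notMem (by simp)]
        have hc : List.count v [l.get ⟨i, h1⟩] = 1 := by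
          simp [hgv, hgv ▸ hv]
        omega
      · rw [if_neg (by
          simp only [List.getElem?_eq_getElem h1, Option.some.injEq]
          intro hh; exact hv (hgv ▸ hh))]
        have hc : List.count v [l.get ⟨i, h1⟩] = 0 := by
          simp only [hgv, List.count_singleton']
          exact if_neg (fun hh => hv (hgv ▸ hh))
        omega

lemma key_counts (n : ℕ) (ks : List (Fin n)) (h : IsShuffleSystem (List.finRange n) ks)
    (i : Fin ks.length) :
    ∃ m, m < n - (ks.get i).val ∧
      (ks.take i.val).count (ks.get i) = m ∧
      (∀ v : Fin n, v.val = (ks.get i).val + 1 → (ks.take i.val).count v = m) ∧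
      (∀ v : Fin n, v.val + 1 = (ks.get i).val → (ks.take i.val).count v = m + 1) := by
  obtain ⟨pos, hval, hmono, hrow1, hrow2, hsurj⟩ := h
  simp only [List.length_finRange] at hval hmono hrow1 hrow2 hsurj
  -- identify the mutation vertex
  obtain ⟨k0, m, hk0, hm, hpos⟩ := hsurj i
  obtain ⟨hlt, hget⟩ := hval k0 m hk0 hm
  have hgetk : ks.get i = ⟨k0, hk0⟩ := by
    have : (⟨pos k0 m, hlt⟩ : Fin ks.length) = i := Fin.ext hpos
    rw [← this, hget, List.get_finRange]
    rfl
  have hkval : (ks.get i).val = k0 := by rw [hgetk]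
  -- strict monotonicity iff
  have mono_iff : ∀ v m1 m2, m1 < n - v → m2 < n - v →
      (pos v m1 < pos v m2 ↔ m1 < m2) := by
    intro v m1 m2 h1 h2
    constructor
    · intro hp
      by_contra h'
      push_neg at h'
      rcases Nat.lt_or_ge m2 m1 with h'' | h''
      · exact absurd (hmono v m2 m1 (by omega) h'' h1) (by omega)
      · have he : m1 = m2 := by omega
        rw [he] at hp; omega
    · intro h'
      exact hmono v m1 m2 (by omega) h' h2
  have pos_inj : ∀ v m1 m2, m1 < n - v → m2 < n - v →
      pos v m1 = pos v m2 → m1 = m2 := by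
    intro v m1 m2 h1 h2 he
    have a := mono_iff v m1 m2 h1 h2
    have b := mono_iff v m2 m1 h2 h1
    omega
  -- count formula
  have cf : ∀ (j : ℕ), j ≤ ks.length → ∀ (v : Fin n),
      (ks.take j).count v =
        ((Finset.range (n - v.val)).filter (fun m' => pos v.val m' < j)).card := by
    intro j hj v
    rw [count_take_eq ks v j hj]
    have himg : (Finset.range j).filter (fun p => ks[p]? = some v)
        = ((Finset.range (n - v.val)).filter (fun m' => pos v.val m' < j)).image
            (pos v.val) := by
      ext p
      simp only [Finset.mem_filter, Finset.mem_range, Finset.mem_image]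
      constructor
      · rintro ⟨hp, hgetp⟩
        have hplen : p < ks.length := lt_of_lt_of_le hp hj
        obtain ⟨v0, m0, hv0, hm0, hp0⟩ := hsurj ⟨p, hplen⟩
        obtain ⟨hlt0, hget0⟩ := hval v0 m0 hv0 hm0
        have hvv : v = ⟨v0, hv0⟩ := by
          have h1 : ks[p] = v := by
            rw [List.getElem?_eq_getElem hplen] at hgetp
            exact Option.some.inj hgetp
          have h2 : (⟨pos v0 m0, hlt0⟩ : Fin ks.length) = ⟨p, hplen⟩ := Fin.ext hp0
          rw [h2, List.get_finRange] at hget0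
          rw [← h1]
          exact hget0
        have hplt : pos v0 m0 < j := by
          have : pos v0 m0 = p := hp0
          omega
        refine ⟨m0, ⟨?_, ?_⟩, ?_⟩
        · rw [hvv]; exact hm0
        · rw [hvv]; exact hplt
        · rw [hvv]; exact hp0
      · rintro ⟨m0, ⟨hm0, hlt0⟩, hpeq⟩
        obtain ⟨hl, hg⟩ := hval v.val m0 v.isLt hm0
        refine ⟨by omega, ?_⟩
        rw [← hpeq, List.getElem?_eq_getElem hl]
        have : ks[pos v.val m0] = ks.get ⟨pos v.val m0, hl⟩ := rfl
        rw [this, hg, List.get_finRange]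
        rfl
    rw [himg, Finset.card_image_of_injOn]
    intro a ha b hb hab
    simp only [Finset.coe_filter, Set.mem_setOf_eq, Finset.mem_range] at ha hb
    exact pos_inj v.val a b ha.1 hb.1 hab
  have hilen : (i : ℕ) ≤ ks.length := le_of_lt i.isLt
  refine ⟨m, by omega, ?_, ?_, ?_⟩
  · -- count of k itself
    rw [cf i.val hilen (ks.get i)]
    have : (Finset.range (n - (ks.get i).val)).filter
        (fun m' => pos (ks.get i).val m' < i.val) = Finset.range m := by
      ext m'
      simp only [Finset.mem_filter, Finset.mem_range, hkval]
      constructor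
      · rintro ⟨h1, h2⟩
        rw [← hpos] at h2
        exact (mono_iff k0 m' m h1 hm).mp h2
      · intro h'
        exact ⟨by omega, by rw [← hpos]; exact (mono_iff k0 m' m (by omega) hm).mpr h'⟩
    rw [this, Finset.card_range]
  · -- count of k+1
    intro v hv
    rw [cf i.val hilen v]
    have hk1 : k0 + 1 < n := by have := v.isLt; omega
    have : (Finset.range (n - v.val)).filter (fun m' => pos v.val m' < i.val)
        = Finset.range m := by
      ext m'
      simp only [Finset.mem_filter, Finset.mem_range, hv, hkval]
      rw [hkval] at hv
      constructor
      · rintro ⟨h1, h2⟩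
        rw [← hpos] at h2
        by_contra h'
        push_neg at h'
        have hmlt : m < n - (k0 + 1) := by omega
        have s1 : pos k0 m < pos (k0 + 1) m := hrow1 k0 m hk1 hmlt
        have s2 : pos (k0 + 1) m ≤ pos (k0 + 1) m' := by
          rcases Nat.lt_or_ge m m' with hc | hc
          · exact le_of_lt (hmono (k0+1) m m' (by omega) hc (by omega))
          · have he : m = m' := by omega
            rw [he]
        omega
      · intro h'
        have hmle : m ≤ n - (k0 + 1) := by omega
        refine ⟨by omega, ?_⟩
        rw [← hpos]
        have s1 : pos (k0 + 1) m' < pos k0 (m' + 1) := hrow2 k0 m' hk1 (by omega)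
        have s2 : pos k0 (m' + 1) ≤ pos k0 m := by
          rcases Nat.lt_or_ge (m' + 1) m with hc | hc
          · exact le_of_lt (hmono k0 (m'+1) m (by omega) hc hm)
          · have : m' + 1 = m := by omega
            simp [this]
        omega
    rw [this, Finset.card_range]
  · -- count of k-1
    intro v hv
    rw [cf i.val hilen v]
    rw [hkval] at hv
    have hk1 : v.val + 1 < n := by omega
    have : (Finset.range (n - v.val)).filter (fun m' => pos v.val m' < i.val)
        = Finset.range (m + 1) := by
      ext m'
      simp only [Finset.mem_filter, Finset.mem_range]
      constructor
      · rintro ⟨h1, h2⟩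
        rw [← hpos] at h2
        by_contra h'
        push_neg at h'
        have s1 : pos (v.val + 1) m < pos v.val (m + 1) :=
          hrow2 v.val m hk1 (by omega)
        have s2 : pos v.val (m + 1) ≤ pos v.val m' := by
          rcases Nat.lt_or_ge (m + 1) m' with hc | hc
          · exact le_of_lt (hmono v.val (m+1) m' (by omega) hc h1)
          · have : m + 1 = m' := by omega
            simp [this]
        rw [hv] at s1
        omega
      · intro h'
        refine ⟨by omega, ?_⟩
        rw [← hpos]
        have s1 : pos v.val m < pos (v.val + 1) m := hrow1 v.val m hk1 (by omega)
        have s2 : pos v.val m' ≤ pos v.val m := by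
          rcases Nat.lt_or_ge m' m with hc | hc
          · exact le_of_lt (hmono v.val m' m (by omega) hc (by omega))
          · have : m' = m := by omega
            simp [this]
        rw [hv] at s1
        omega
    rw [this, Finset.card_range]

lemma inv_lemma (n : ℕ) (ks : List (Fin n)) (h : IsShuffleSystem (List.finRange n) ks) :
    ∀ p, p ≤ ks.length → ∀ (a b : Fin n),
      mutExtSeq (framedMat (AnMat n)) (ks.take p) (Sum.inl a) b
        = eps ((ks.take p).count a + (ks.take p).count b) * AnMat n a b := by
  intro p
  induction p with
  | zero => intro _ a b; simp [mutExtSeq, framedMat, eps]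
  | succ p ih =>
    intro hp a b
    have hplen : p < ks.length := hp
    have htake : ks.take (p+1) = ks.take p ++ [ks.get ⟨p, hplen⟩] := by
      rw [List.take_succ]; simp [List.getElem?_eq_getElem hplen]
    set k := ks.get ⟨p, hplen⟩ with hk
    obtain ⟨m, hm, hck, hck1, hck2⟩ := key_counts n ks h ⟨p, hplen⟩
    simp only [← hk] at hck hck1 hck2 hm
    have ihh := ih (le_of_lt hplen)
    have hfold : ∀ (x : Fin n ⊕ Fin n) (y : Fin n),
        mutExtSeq (framedMat (AnMat n)) (ks.take (p+1)) x y
          = mutExt (mutExtSeq (framedMat (AnMat n)) (ks.take p)) k x y := by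
      intro x y
      rw [htake]
      simp [mutExtSeq, List.foldl_append]
    have hcount : ∀ v : Fin n, (ks.take (p+1)).count v
        = (ks.take p).count v + if k = v then 1 else 0 := by
      intro v
      rw [htake, List.count_append]
      simp [List.count_singleton']
    rw [hfold, mutExt]
    by_cases hak : a = k
    · by_cases hbk : b = k
      · have hA : AnMat n a b = 0 := by simp [AnMat, hak, hbk]
        rw [if_pos (Or.inl (by rw [hak])), ihh, hA]
        ring
      · rw [if_pos (Or.inl (by rw [hak])), ihh]
        rw [hcount a, hcount b, if_pos hak.symm, if_neg (fun hh => hbk hh.symm)]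
        have : (ks.take p).count a + 1 + ((ks.take p).count b + 0)
            = ((ks.take p).count a + (ks.take p).count b) + 1 := by omega
        rw [this, eps_succ]
        ring
    · by_cases hbk : b = k
      · rw [if_pos (Or.inr hbk), ihh]
        rw [hcount a, hcount b, if_neg (fun hh => hak hh.symm), if_pos hbk.symm]
        have : (ks.take p).count a + 0 + ((ks.take p).count b + 1)
            = ((ks.take p).count a + (ks.take p).count b) + 1 := by omega
        rw [this, eps_succ]
        ring
      · rw [if_neg (by
          rintro (h1 | h1)
          · exact hak (Sum.inl.inj h1)
          · exact hbk h1)]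
        rw [hcount a, hcount b, if_neg (fun hh => hak hh.symm),
          if_neg (fun hh => hbk hh.symm)]
        rw [ihh a b, ihh a k, ihh k b]
        have hzero :
            |eps ((ks.take p).count a + (ks.take p).count k) * AnMat n a k| *
              (eps ((ks.take p).count k + (ks.take p).count b) * AnMat n k b) +
            eps ((ks.take p).count a + (ks.take p).count k) * AnMat n a k *
              |eps ((ks.take p).count k + (ks.take p).count b) * AnMat n k b| = 0 := by
          rw [abs_mul, abs_mul, abs_eps, abs_eps, one_mul, one_mul]
          by_cases ha1 : a.val = k.val + 1
          · have hsa : eps ((ks.take p).count a + (ks.take p).count k) = 1 := by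
              rw [hck1 a ha1, hck, eps_add_self]
            have hAa : AnMat n a k = 1 := by simp [AnMat, ha1]
            by_cases hb1 : k.val = b.val + 1
            · have hsb : eps ((ks.take p).count k + (ks.take p).count b) = -1 := by
                rw [hck2 b hb1.symm, hck, eps_add_succ]
              have hAb : AnMat n k b = 1 := by simp [AnMat, hb1]
              rw [hsa, hsb, hAa, hAb]; norm_num
            · by_cases hb2 : k.val + 1 = b.val
              · have hsb : eps ((ks.take p).count k + (ks.take p).count b) = 1 := by
                  rw [hck1 b hb2.symm, hck, eps_add_self]
                have hAb : AnMat n k b = -1 := by simp [AnMat, hb1, hb2]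
                rw [hsa, hsb, hAa, hAb]; norm_num
              · have hAb : AnMat n k b = 0 := by simp [AnMat, hb1, hb2]
                rw [hAb]; simp
          · by_cases ha2 : a.val + 1 = k.val
            · have hsa : eps ((ks.take p).count a + (ks.take p).count k) = -1 := by
                rw [hck2 a ha2, hck, eps_succ_add]
              have hAa : AnMat n a k = -1 := by simp [AnMat, ha1, ha2]
              by_cases hb1 : k.val = b.val + 1
              · have hsb : eps ((ks.take p).count k + (ks.take p).count b) = -1 := by
                  rw [hck2 b hb1.symm, hck, eps_add_succ]
                have hAb : AnMat n k b = 1 := by simp [AnMat, hb1]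
                rw [hsa, hsb, hAa, hAb]; norm_num
              · by_cases hb2 : k.val + 1 = b.val
                · have hsb : eps ((ks.take p).count k + (ks.take p).count b) = 1 := by
                    rw [hck1 b hb2.symm, hck, eps_add_self]
                  have hAb : AnMat n k b = -1 := by simp [AnMat, hb1, hb2]
                  rw [hsa, hsb, hAa, hAb]; norm_num
                · have hAb : AnMat n k b = 0 := by simp [AnMat, hb1, hb2]
                  rw [hAb]; simp
            · have hAa : AnMat n a k = 0 := by simp [AnMat, ha1, ha2]
              rw [hAa]; simp
        rw [hzero]
        norm_num

/-- Along any allowed shuffle mutation sequence on the framed linearly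
oriented `A_n` quiver, at every step the mutation vertex `k_i` receives,
within the mutable part, exactly a simple arrow from `k_i - 1` (if it exists)
and a simple arrow from `k_i + 1` (if it exists) and no other incoming
arrows; in particular `k_i` is a sink of the mutable part. -/
theorem an_shuffle_incoming_arrows (n : ℕ) (ks : List (Fin n))
    (h : IsShuffleSystem (List.finRange n) ks) (i : Fin ks.length) :
    (∀ j : Fin n,
      mutExtSeq (framedMat (AnMat n)) (ks.take i.val) (Sum.inl j) (ks.get i) =
        if j.val = (ks.get i).val + 1 ∨ (ks.get i).val = j.val + 1 then 1 else 0) ∧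
    (∀ j : Fin n,
      mutExtSeq (framedMat (AnMat n)) (ks.take i.val) (Sum.inl (ks.get i)) j ≤ 0) := by
  obtain ⟨m, hm, hck, hck1, hck2⟩ := key_counts n ks h i
  have hinv := inv_lemma n ks h i.val (le_of_lt i.isLt)
  set k := ks.get i with hk
  constructor
  · intro j
    rw [hinv j k]
    by_cases hj1 : j.val = k.val + 1
    · have hs : eps ((ks.take i.val).count j + (ks.take i.val).count k) = 1 := by
        rw [hck1 j hj1, hck, eps_add_self]
      have hA : AnMat n j k = 1 := by simp [AnMat, hj1]
      rw [hs, hA, if_pos (Or.inl hj1)]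
      ring
    · by_cases hj2 : k.val = j.val + 1
      · have hs : eps ((ks.take i.val).count j + (ks.take i.val).count k) = -1 := by
          rw [hck2 j hj2.symm, hck, eps_succ_add]
        have hA : AnMat n j k = -1 := by simp [AnMat, hj1, hj2.symm]
        rw [hs, hA, if_pos (Or.inr hj2)]
        ring
      · have h3 : ¬ (j.val + 1 = k.val) := fun hh => hj2 hh.symm
        have hA : AnMat n j k = 0 := by
          simp [AnMat, hj1, h3]
        rw [hA, if_neg (by rintro (h1 | h1); exacts [hj1 h1, hj2 h1])]
        ring
  · intro j
    rw [hinv k j]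
    by_cases hj1 : k.val = j.val + 1
    · have hs : eps ((ks.take i.val).count k + (ks.take i.val).count j) = -1 := by
        rw [hck2 j hj1.symm, hck, eps_add_succ]
      have hA : AnMat n k j = 1 := by simp [AnMat, hj1]
      rw [hs, hA]; norm_num
    · by_cases hj2 : k.val + 1 = j.val
      · have hs : eps ((ks.take i.val).count k + (ks.take i.val).count j) = 1 := by
          rw [hck1 j hj2.symm, hck, eps_add_self]
        have hA : AnMat n k j = -1 := by simp [AnMat, hj1, hj2]
        rw [hs, hA]; norm_num
      · have hA : AnMat n k j = 0 := by simp [AnMat, hj1, hj2]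
        rw [hA]; simp
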